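/- Let T be a rooted phylogenetic X-tree and L a minimal topological lasso for T such that the graph Γ(L) with vertex set X and edge set L is a block graph. Let v be an interior vertex of T with children v_1, …, v_l. Then for every i there exists a unique leaf x_i ∈ L(v_i) such that {x_s, x_t} ∈ L for all distinct s, t ∈ {1,…,l}. -/

import Mathlib

open scoped Classical

/-- A rooted `X`-tree on vertex type `V`: a finite rooted tree encoded by a parent
function, whose leaves (the vertices with no children) are bijectively labelled by `X`. -/
structure XTree (X V : Type) where
  root : V
  parent : V → V
  parent_root : parent root = root
  reaches : ∀ v : V, ∃ n : ℕ, parent^[n] v = root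
  leaf : X → V
  leaf_inj : Function.Injective leaf
  leaf_iff : ∀ v : V, (∀ w : V, parent w = v → w = v) ↔ v ∈ Set.range leaf

namespace XTree

variable {X V : Type}

/-- The children of a vertex. -/
def children (T : XTree X V) (v : V) : Set V := {w | T.parent w = v ∧ w ≠ v}

def IsLeaf (T : XTree X V) (v : V) : Prop := v ∈ Set.range T.leaf

def Interior (T : XTree X V) (v : V) : Prop := ¬ T.IsLeaf v

/-- Phylogenetic: root has at least two children, and no non-root vertex has exactly
one child (no degree-two vertices apart from possibly the root). -/
def IsPhylo (T : XTree X V) : Prop :=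
  2 ≤ (T.children T.root).ncard ∧
    ∀ v : V, v ≠ T.root → T.Interior v → 2 ≤ (T.children v).ncard

/-- `T.Desc v w` : `w` is a descendant of `v` (or equal to `v`). -/
def Desc (T : XTree X V) (v w : V) : Prop := ∃ n : ℕ, T.parent^[n] w = v

/-- The set of leaf labels below a vertex. -/
def leafSet (T : XTree X V) (v : V) : Set X := {x | T.Desc v (T.leaf x)}

/-- `v` is the last common ancestor of the set `S` of vertices. -/
def IsLCA (T : XTree X V) (v : V) (S : Set V) : Prop :=
  (∀ w ∈ S, T.Desc v w) ∧ ∀ u : V, (∀ w ∈ S, T.Desc u w) → T.Desc u v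

/-- Not a star tree: some interior vertex other than the root. -/
def NonDegenerate (T : XTree X V) : Prop := ∃ v : V, T.Interior v ∧ v ≠ T.root

end XTree

/-- A cord: a 2-element subset of `X`. -/
def IsCord {X : Type} (c : Set X) : Prop := ∃ a b : X, a ≠ b ∧ c = {a, b}

/-- The graph `Γ(L)` with vertex set `X` and edge set `L`. -/
def cordGraph {X : Type} (L : Set (Set X)) : SimpleGraph X where
  Adj a b := a ≠ b ∧ ({a, b} : Set X) ∈ L
  symm := by
    constructor
    intro a b h
    exact ⟨Ne.symm h.1, by rw [Set.pair_comm]; exact h.2⟩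
  loopless := by constructor; intro a h; exact h.1 rfl

/-- Topological lasso, via the child-edge graph characterization: for every interior
vertex, any two distinct child subtrees are joined by a cord of `L`. -/
def XTree.IsTopoLasso {X V : Type} (T : XTree X V) (L : Set (Set X)) : Prop :=
  ∀ v c₁ c₂ : V, c₁ ∈ T.children v → c₂ ∈ T.children v → c₁ ≠ c₂ →
    ∃ a b : X, a ∈ T.leafSet c₁ ∧ b ∈ T.leafSet c₂ ∧ ({a, b} : Set X) ∈ L

/-- Set-inclusion minimal topological lasso. -/
def XTree.IsMinTopoLasso {X V : Type} (T : XTree X V) (L : Set (Set X)) : Prop :=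
  T.IsTopoLasso L ∧ ∀ L' ⊆ L, T.IsTopoLasso L' → L' = L

/-- A nonempty vertex set inducing a connected subgraph with no cut vertex. -/
def GoodSet {α : Type} (G : SimpleGraph α) (B : Set α) : Prop :=
  B.Nonempty ∧ (G.induce B).Connected ∧
    ∀ v ∈ B, (B \ {v}).Nonempty → (G.induce (B \ {v})).Connected

/-- A block: a maximal connected induced subgraph without a cut vertex. -/
def IsBlock {α : Type} (G : SimpleGraph α) (B : Set α) : Prop :=
  GoodSet G B ∧ ∀ C : Set α, GoodSet G C → B ⊆ C → B = C

/-- A block graph: every block is a clique. -/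
def IsBlockGraph {α : Type} (G : SimpleGraph α) : Prop :=
  ∀ B : Set α, IsBlock G B → G.IsClique B

/-- A cut vertex: deleting it disconnects the graph. -/
def IsCutVtx {α : Type} (G : SimpleGraph α) (v : α) : Prop :=
  ¬ (G.induce {w | w ≠ v}).Connected

/-- Claw-free: no induced `K_{1,3}`. -/
def ClawFree {α : Type} (G : SimpleGraph α) : Prop :=
  ¬ ∃ v a b c : α, a ≠ b ∧ a ≠ c ∧ b ≠ c ∧
    G.Adj v a ∧ G.Adj v b ∧ G.Adj v c ∧ ¬ G.Adj a b ∧ ¬ G.Adj a c ∧ ¬ G.Adj b c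

/-- The child-edge graph `G(L,v)`: vertices are the children of `v` (equivalently
the child edges of `v`), two of them adjacent if a cord of `L` joins their subtrees. -/
def childGraph {X V : Type} (T : XTree X V) (L : Set (Set X)) (v : V) :
    SimpleGraph {c : V // c ∈ T.children v} where
  Adj c₁ c₂ := c₁ ≠ c₂ ∧ ∃ a b : X,
    a ∈ T.leafSet (c₁ : V) ∧ b ∈ T.leafSet (c₂ : V) ∧ ({a, b} : Set X) ∈ L
  symm := by
    constructor
    rintro c₁ c₂ ⟨h, a, b, ha, hb, hm⟩
    exact ⟨Ne.symm h, b, a, hb, ha, by rw [Set.pair_comm]; exact hm⟩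
  loopless := by constructor; rintro c ⟨h, -⟩; exact h rfl

/-- `cl(T)`: the clusters of non-root interior vertices. -/
def clSet {X V : Type} (T : XTree X V) : Set (Set X) :=
  {A | ∃ v : V, v ≠ T.root ∧ T.Interior v ∧ A = T.leafSet v}

/-- A cluster marker map for `T` and the ordering of `X`:
`f A` is the `σ`-least element of `A` not used as marker of a proper subcluster. -/
def IsClusterMarker {X V : Type} [LinearOrder X] (T : XTree X V) (f : Set X → X) : Prop :=
  ∀ A ∈ clSet T,
    ((∃ B ∈ clSet T, B ⊂ A) →
      IsLeast (A \ {y | ∃ B ∈ clSet T, B ⊂ A ∧ f B = y}) (f A)) ∧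
    ((¬ ∃ B ∈ clSet T, B ⊂ A) → IsLeast A (f A))

/-- The marker of a child `c` of an interior vertex: the label of `c` if `c` is a leaf,
and `f (L(c))` if `c` is interior. -/
def markRel {X V : Type} (T : XTree X V) (f : Set X → X) (c : V) (a : X) : Prop :=
  T.leaf a = c ∨ (T.Interior c ∧ a = f (T.leafSet c))

/-- `L_{(T,f)}(v)`: all cords between markers of distinct children of `v`. -/
def lassoAt {X V : Type} (T : XTree X V) (f : Set X → X) (v : V) : Set (Set X) :=
  {c | ∃ c₁ c₂ : V, c₁ ∈ T.children v ∧ c₂ ∈ T.children v ∧ c₁ ≠ c₂ ∧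
    ∃ a b : X, markRel T f c₁ a ∧ markRel T f c₂ b ∧ c = {a, b}}

/-- `L_{(T,f)}`: the union over all interior vertices of `L_{(T,f)}(v)`. -/
def lassoFull {X V : Type} (T : XTree X V) (f : Set X → X) : Set (Set X) :=
  {c | ∃ v : V, T.Interior v ∧ c ∈ lassoAt T f v}

/-- An equidistant proper edge-weighting of `T`, encoded by the height function
`t v` = distance from `v` to any leaf below it (so all leaves are equidistant
from the root); properness: interior edges have positive weight. -/
def EquidistantProper {X V : Type} (T : XTree X V) (t : V → ℝ) : Prop :=
  (∀ x : X, t (T.leaf x) = 0) ∧ (∀ v : V, t v ≤ t (T.parent v)) ∧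
    ∀ v : V, v ≠ T.root → T.Interior v → t v < t (T.parent v)

/-- Equivalence of two `X`-trees: a root-, parent- and labelling-preserving bijection. -/
def TreeEquiv {X V V' : Type} (T : XTree X V) (T' : XTree X V') : Prop :=
  ∃ φ : V ≃ V', φ T.root = T'.root ∧ (∀ v, φ (T.parent v) = T'.parent (φ v)) ∧
    ∀ x, φ (T.leaf x) = T'.leaf x

/-- `S` is (equivalent to) the restriction `T|_Y`: the clusters of `S` are exactly the
nonempty traces on `Y` of the clusters of `T`. -/
def IsRestriction {X : Type} (Y : Set X) {V W : Type}
    (T : XTree X V) (S : XTree (↥Y) W) : Prop :=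
  ∀ A : Set X, A ⊆ Y →
    ((∃ w : W, A = Subtype.val '' S.leafSet w) ↔ (A.Nonempty ∧ ∃ v : V, A = T.leafSet v ∩ Y))

/-- The restriction `L|_Y` of a set of cords of `X` to cords of `Y`. -/
def restrictLasso {X : Type} (Y : Set X) (L : Set (Set X)) : Set (Set ↥Y) :=
  {c | ∃ a b : ↥Y, a ≠ b ∧ c = {a, b} ∧ ({(a : X), (b : X)} : Set X) ∈ L}


namespace XTree
variable {X V : Type}

lemma desc_refl (T : XTree X V) (v : V) : T.Desc v v := ⟨0, rfl⟩

lemma desc_trans {T : XTree X V} {u v w : V} (h1 : T.Desc u v) (h2 : T.Desc v w) :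
    T.Desc u w := by
  obtain ⟨n, hn⟩ := h1; obtain ⟨m, hm⟩ := h2
  exact ⟨n + m, by rw [Function.iterate_add_apply, hm, hn]⟩

lemma root_fixed (T : XTree X V) (n : ℕ) : T.parent^[n] T.root = T.root :=
  Function.iterate_fixed T.parent_root n

lemma desc_antisymm {T : XTree X V} {u v : V} (h1 : T.Desc u v) (h2 : T.Desc v u) :
    u = v := by
  obtain ⟨n, hn⟩ := h1; obtain ⟨m, hm⟩ := h2
  rcases Nat.eq_zero_or_pos (m + n) with h | h
  · have hn0 : n = 0 := by omega
    subst hn0; exact hn.symm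
  · have hper : T.parent^[m + n] v = v := by
      rw [Function.iterate_add_apply, hn, hm]
    obtain ⟨k, hk⟩ := T.reaches v
    have hfix : T.parent^[(m + n) * k] v = v := by
      rw [Function.iterate_mul]
      exact Function.iterate_fixed hper k
    have hroot : v = T.root := by
      have hge : (m + n) * k = ((m + n) * k - k) + k := by have := Nat.le_mul_of_pos_left k h; omega
      rw [hge, Function.iterate_add_apply, hk, root_fixed] at hfix
      exact hfix.symm
    have : u = T.root := by rw [← hn, hroot, root_fixed]
    rw [this, hroot]

lemma desc_comparable {T : XTree X V} {u w x : V} (h1 : T.Desc u x) (h2 : T.Desc w x) :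
    T.Desc u w ∨ T.Desc w u := by
  obtain ⟨n, hn⟩ := h1; obtain ⟨m, hm⟩ := h2
  rcases le_total n m with h | h
  · right
    exact ⟨m - n, by rw [← hn, ← Function.iterate_add_apply, Nat.sub_add_cancel h, hm]⟩
  · left
    exact ⟨n - m, by rw [← hm, ← Function.iterate_add_apply, Nat.sub_add_cancel h, hn]⟩

lemma desc_of_child {T : XTree X V} {v c : V} (hc : c ∈ T.children v) : T.Desc v c :=
  ⟨1, by simpa using hc.1⟩

lemma child_eq_of_desc_child {T : XTree X V} {v c₁ c₂ : V}
    (h1 : c₁ ∈ T.children v) (h2 : c₂ ∈ T.children v) (d : T.Desc c₁ c₂) : c₁ = c₂ := by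
  obtain ⟨n, hn⟩ := d
  cases n with
  | zero => exact hn.symm
  | succ k =>
    rw [Function.iterate_succ_apply, h2.1] at hn
    exact absurd (desc_antisymm (desc_of_child h1) ⟨k, hn⟩).symm h1.2

lemma child_eq_of_desc {T : XTree X V} {v c₁ c₂ w : V}
    (h1 : c₁ ∈ T.children v) (h2 : c₂ ∈ T.children v)
    (d1 : T.Desc c₁ w) (d2 : T.Desc c₂ w) : c₁ = c₂ := by
  rcases desc_comparable d1 d2 with h | h
  · exact child_eq_of_desc_child h1 h2 h
  · exact (child_eq_of_desc_child h2 h1 h).symm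

lemma exists_child_desc {T : XTree X V} {v w : V} (h : T.Desc v w) (hne : w ≠ v) :
    ∃ c ∈ T.children v, T.Desc c w := by
  have key : ∀ (n : ℕ) (w : V), T.parent^[n] w = v → w ≠ v → ∃ c ∈ T.children v, T.Desc c w := by
    intro n
    induction n with
    | zero => exact fun w hn hne => absurd hn hne
    | succ k ih =>
      intro w hn hne
      rw [Function.iterate_succ_apply] at hn
      by_cases hpw : T.parent w = v
      · exact ⟨w, ⟨hpw, hne⟩, desc_refl T w⟩
      · obtain ⟨c, hc, hdc⟩ := ih (T.parent w) hn hpw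
        exact ⟨c, hc, desc_trans hdc ⟨1, by simp⟩⟩
  obtain ⟨n, hn⟩ := h
  exact key n w hn hne

lemma leafSet_subset_of_child {T : XTree X V} {v c : V} (hc : c ∈ T.children v) :
    T.leafSet c ⊆ T.leafSet v := fun _ hx => desc_trans (desc_of_child hc) hx

lemma leafSet_disjoint {T : XTree X V} {v c₁ c₂ : V}
    (h1 : c₁ ∈ T.children v) (h2 : c₂ ∈ T.children v) (hne : c₁ ≠ c₂) {x : X}
    (hx1 : x ∈ T.leafSet c₁) (hx2 : x ∈ T.leafSet c₂) : False :=
  hne (child_eq_of_desc h1 h2 hx1 hx2)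

lemma eq_of_desc_isLeaf {T : XTree X V} {w : V} (hl : T.IsLeaf w) :
    ∀ (n : ℕ) (z : V), T.parent^[n] z = w → z = w := by
  intro n
  induction n with
  | zero => exact fun z hz => hz
  | succ k ih =>
    intro z hz
    rw [Function.iterate_succ_apply] at hz
    exact (T.leaf_iff w).mpr hl z (ih _ hz)

lemma leafSet_isLeaf {T : XTree X V} {w : V} (hl : T.IsLeaf w) {a b : X}
    (ha : a ∈ T.leafSet w) (hb : b ∈ T.leafSet w) : a = b := by
  obtain ⟨n, hn⟩ := ha; obtain ⟨m, hm⟩ := hb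
  exact T.leaf_inj ((eq_of_desc_isLeaf hl n _ hn).trans (eq_of_desc_isLeaf hl m _ hm).symm)

lemma desc_ssubset {T : XTree X V} {v c : V} (hc : c ∈ T.children v) :
    {u | T.Desc c u} ⊂ {u | T.Desc v u} := by
  constructor
  · exact fun u hu => desc_trans (desc_of_child hc) hu
  · intro hsub
    have : T.Desc c v := hsub (desc_refl T v)
    exact hc.2 (desc_antisymm (desc_of_child hc) this).symm

lemma unique_triple {T : XTree X V} {v u c₁ c₂ d₁ d₂ : V} {a b : X}
    (hc₁ : c₁ ∈ T.children v) (hc₂ : c₂ ∈ T.children v) (hcne : c₁ ≠ c₂)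
    (hd₁ : d₁ ∈ T.children u) (hd₂ : d₂ ∈ T.children u) (hdne : d₁ ≠ d₂)
    (ha1 : a ∈ T.leafSet c₁) (hb1 : b ∈ T.leafSet c₂)
    (ha2 : a ∈ T.leafSet d₁) (hb2 : b ∈ T.leafSet d₂) :
    u = v ∧ d₁ = c₁ ∧ d₂ = c₂ := by
  have hva : T.Desc v (T.leaf a) := desc_trans (desc_of_child hc₁) ha1
  have hua : T.Desc u (T.leaf a) := desc_trans (desc_of_child hd₁) ha2
  have hub : T.Desc u (T.leaf b) := desc_trans (desc_of_child hd₂) hb2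
  have hvb : T.Desc v (T.leaf b) := desc_trans (desc_of_child hc₂) hb1
  have huv : u = v := by
    rcases desc_comparable hva hua with h | h
    · -- T.Desc v u
      by_cases he : u = v
      · exact he
      · obtain ⟨e, he', hde⟩ := exists_child_desc h he
        have h1 : T.Desc e (T.leaf a) := desc_trans hde hua
        have h2 : T.Desc e (T.leaf b) := desc_trans hde hub
        exact absurd ((child_eq_of_desc he' hc₁ h1 ha1).symm.trans
          (child_eq_of_desc he' hc₂ h2 hb1)) hcne
    · -- T.Desc u v
      by_cases he : v = u
      · exact he.symm
      · obtain ⟨e, he', hde⟩ := exists_child_desc h he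
        have h1 : T.Desc e (T.leaf a) := desc_trans hde hva
        have h2 : T.Desc e (T.leaf b) := desc_trans hde hvb
        exact absurd ((child_eq_of_desc he' hd₁ h1 ha2).symm.trans
          (child_eq_of_desc he' hd₂ h2 hb2)) hdne
  subst huv
  exact ⟨rfl, child_eq_of_desc hd₁ hc₁ ha2 ha1, child_eq_of_desc hd₂ hc₂ hb2 hb1⟩

lemma interior_child {T : XTree X V} {v : V} (hv : T.Interior v) :
    ∃ c, c ∈ T.children v := by
  by_contra h
  push_neg at h
  refine hv ((T.leaf_iff v).mp ?_)
  intro w hw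
  by_contra hne
  exact h w ⟨hw, hne⟩

lemma leafSet_nonempty [Fintype V] (T : XTree X V) (v : V) : (T.leafSet v).Nonempty := by
  have key : ∀ (n : ℕ) (w : V), ({u | T.Desc w u}).ncard ≤ n → (T.leafSet w).Nonempty := by
    intro n
    induction n with
    | zero =>
      intro w hw
      exfalso
      have : w ∈ ({u | T.Desc w u}) := desc_refl T w
      have h0 : ({u | T.Desc w u}).ncard = 0 := le_antisymm hw (Nat.zero_le _)
      rw [Set.ncard_eq_zero (Set.toFinite _)] at h0
      simp [h0] at this
    | succ n ih =>
      intro w hw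
      by_cases hl : T.IsLeaf w
      · obtain ⟨x, hx⟩ := hl
        exact ⟨x, ⟨0, hx⟩⟩
      · obtain ⟨c, hc⟩ := interior_child hl
        have hlt : ({u | T.Desc c u}).ncard < ({u | T.Desc w u}).ncard :=
          Set.ncard_lt_ncard (desc_ssubset hc) (Set.toFinite _)
        obtain ⟨x, hx⟩ := ih c (by omega)
        exact ⟨x, leafSet_subset_of_child hc hx⟩
  exact key _ v le_rfl

end XTree

lemma pair_eq_cases {X : Type} {p q a b : X} (h : ({p, q} : Set X) = {a, b}) (hpq : p ≠ q) :
    (p = a ∧ q = b) ∨ (p = b ∧ q = a) := by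
  have hp : p = a ∨ p = b := by
    have : p ∈ ({a, b} : Set X) := h ▸ (by simp)
    simpa using this
  have hq : q = a ∨ q = b := by
    have : q ∈ ({a, b} : Set X) := h ▸ (by simp)
    simpa using this
  rcases hp with hp | hp <;> rcases hq with hq | hq
  · exact absurd (hp.trans hq.symm) hpq
  · exact Or.inl ⟨hp, hq⟩
  · exact Or.inr ⟨hp, hq⟩
  · exact absurd (hp.trans hq.symm) hpq

lemma unique_cord {X V : Type} {T : XTree X V} {L : Set (Set X)} (hmin : T.IsMinTopoLasso L)
    {v c₁ c₂ : V} (hc₁ : c₁ ∈ T.children v) (hc₂ : c₂ ∈ T.children v) (hne : c₁ ≠ c₂) :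
    ∃ a, a ∈ T.leafSet c₁ ∧ ∃ b, b ∈ T.leafSet c₂ ∧ ({a, b} : Set X) ∈ L ∧
      ∀ a' b', a' ∈ T.leafSet c₁ → b' ∈ T.leafSet c₂ → ({a', b'} : Set X) ∈ L →
        a' = a ∧ b' = b := by
  obtain ⟨a, b, ha, hb, hab⟩ := hmin.1 v c₁ c₂ hc₁ hc₂ hne
  refine ⟨a, ha, b, hb, hab, ?_⟩
  intro a' b' ha' hb' hab'
  by_contra hcon
  have hsetne : ({a', b'} : Set X) ≠ ({a, b} : Set X) := by
    intro he
    have hane : a' ≠ b' := fun h =>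
      XTree.leafSet_disjoint hc₁ hc₂ hne ha' (h ▸ hb')
    rcases pair_eq_cases he hane with ⟨h1, h2⟩ | ⟨h1, h2⟩
    · exact hcon ⟨h1, h2⟩
    · exact XTree.leafSet_disjoint hc₁ hc₂ hne ha' (h1 ▸ hb)
  have hlasso : T.IsTopoLasso (L \ {({a', b'} : Set X)}) := by
    intro u d₁ d₂ hd₁ hd₂ hdne
    obtain ⟨p, q, hp, hq, hpq⟩ := hmin.1 u d₁ d₂ hd₁ hd₂ hdne
    by_cases hpq' : ({p, q} : Set X) = ({a', b'} : Set X)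
    · have hpne : p ≠ q := fun h => XTree.leafSet_disjoint hd₁ hd₂ hdne hp (h ▸ hq)
      rcases pair_eq_cases hpq' hpne with ⟨h1, h2⟩ | ⟨h1, h2⟩
      · -- p = a', q = b' : triple (u,d₁,d₂) = (v,c₁,c₂)
        obtain ⟨huv, he1, he2⟩ := XTree.unique_triple hc₁ hc₂ hne hd₁ hd₂ hdne
          ha' hb' (h1 ▸ hp) (h2 ▸ hq)
        subst huv; subst he1; subst he2
        refine ⟨a, b, ha, hb, hab, ?_⟩
        intro hmem
        rw [Set.mem_singleton_iff] at hmem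
        exact hsetne hmem.symm
      · -- p = b', q = a' : triple (u,d₂,d₁) = (v,c₁,c₂)
        obtain ⟨huv, he1, he2⟩ := XTree.unique_triple hc₁ hc₂ hne hd₂ hd₁ (Ne.symm hdne)
          ha' hb' (h2 ▸ hq) (h1 ▸ hp)
        subst huv; subst he1; subst he2
        refine ⟨b, a, hb, ha, ?_, ?_⟩
        · rw [Set.pair_comm]; exact hab
        · intro hmem
          rw [Set.mem_singleton_iff, Set.pair_comm] at hmem
          exact hsetne hmem.symm
    · exact ⟨p, q, hp, hq, hpq, by simpa using hpq'⟩
  have hLL := hmin.2 _ Set.diff_subset hlasso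
  rw [← hLL] at hab'
  exact hab'.2 rfl

section GraphAux

variable {X : Type}

lemma reach_of_chain {G : SimpleGraph X} {B : Set X} :
    ∀ (t : List X) (a : X), List.Chain G.Adj a t → ∀ (ha : a ∈ B), (∀ x ∈ t, x ∈ B) →
    ∀ (x : X) (_ : x ∈ t) (hxB : x ∈ B), (G.induce B).Reachable ⟨a, ha⟩ ⟨x, hxB⟩ := by
  intro t
  induction t with
  | nil => intro a _ _ _ x hx; exact absurd hx List.not_mem_nil
  | cons b t' ih =>
    intro a hch ha hsub x hx hxB
    obtain ⟨hadj, hch'⟩ := List.chain_cons.mp hch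
    have hb : b ∈ B := hsub b List.mem_cons_self
    have hedge : (G.induce B).Adj ⟨a, ha⟩ ⟨b, hb⟩ := hadj
    rcases List.mem_cons.mp hx with h | h
    · rw [show (⟨x, hxB⟩ : ↥B) = ⟨b, hb⟩ from Subtype.ext h]
      exact hedge.reachable
    · exact hedge.reachable.trans
        (ih b hch' hb (fun y hy => hsub y (List.mem_cons_of_mem _ hy)) x h hxB)

lemma chain_connected {G : SimpleGraph X} {B : Set X} {l : List X} (hne : l ≠ [])
    (hch : l.Chain' G.Adj) (hB : ∀ x, x ∈ B ↔ x ∈ l) : (G.induce B).Connected := by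
  obtain ⟨a, t, rfl⟩ := List.exists_cons_of_ne_nil hne
  have hch' : List.Chain G.Adj a t := hch
  have ha : a ∈ B := (hB a).mpr List.mem_cons_self
  have hsub : ∀ x ∈ t, x ∈ B := fun x hx => (hB x).mpr (List.mem_cons_of_mem a hx)
  rw [SimpleGraph.connected_iff]
  refine ⟨?_, ⟨⟨a, ha⟩⟩⟩
  have aux : ∀ w : ↥B, (G.induce B).Reachable ⟨a, ha⟩ w := by
    intro w
    rcases List.mem_cons.mp ((hB w.1).mp w.2) with h | h
    · exact (by rw [show w = ⟨a, ha⟩ from Subtype.ext h] : (G.induce B).Reachable ⟨a, ha⟩ w)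
    · exact reach_of_chain t a hch' ha hsub w.1 h w.2
  exact fun u v => (aux u).symm.trans (aux v)

end GraphAux

section CycleAux

variable {X : Type}

lemma cycle_goodset {G : SimpleGraph X} {l : List X} (hne : l ≠ []) (hnd : l.Nodup)
    (hch : l.Chain' G.Adj)
    (hcl : ∀ x ∈ l.getLast?, ∀ y ∈ l.head?, G.Adj x y) :
    GoodSet G {x | x ∈ l} := by
  refine ⟨?_, chain_connected hne hch (fun x => Iff.rfl), ?_⟩
  · obtain ⟨a, t, rfl⟩ := List.exists_cons_of_ne_nil hne
    exact ⟨a, List.mem_cons_self⟩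
  · intro v hv hne'
    obtain ⟨l₁, l₂, rfl⟩ := List.append_of_mem hv
    have hnd' := hnd
    rw [List.nodup_append] at hnd'
    obtain ⟨hnd1, hnd2', hdisj⟩ := hnd'
    have hv2 : v ∉ l₂ := (List.nodup_cons.mp hnd2').1
    have hnd2 : l₂.Nodup := (List.nodup_cons.mp hnd2').2
    have hv1 : v ∉ l₁ := fun h => hdisj v h v List.mem_cons_self rfl
    have hmB : ∀ x, x ∈ ({y | y ∈ l₁ ++ v :: l₂} \ {v} : Set X) ↔ x ∈ l₂ ++ l₁ := by
      intro x
      simp only [Set.mem_diff, Set.mem_setOf_eq, List.mem_append, List.mem_cons,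
        Set.mem_singleton_iff]
      constructor
      · rintro ⟨h1 | (h1 | h1), h2⟩
        · exact Or.inr h1
        · exact absurd h1 h2
        · exact Or.inl h1
      · rintro (h | h)
        · exact ⟨Or.inr (Or.inr h), fun he => hv2 (he ▸ h)⟩
        · exact ⟨Or.inl h, fun he => hv1 (he ▸ h)⟩
    have hm_ne : l₂ ++ l₁ ≠ [] := by
      obtain ⟨x, hx⟩ := hne'
      intro h0
      have := (hmB x).mp hx
      rw [h0] at this
      exact List.not_mem_nil this
    have hsplit := List.isChain_split.mp hch
    have hc1 : l₁.Chain' G.Adj := hsplit.1.left_of_append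
    have hc2 : l₂.Chain' G.Adj := hsplit.2.tail
    have hm_ch : (l₂ ++ l₁).Chain' G.Adj := by
      show List.IsChain _ _
      rw [List.isChain_append]
      refine ⟨hc2, hc1, ?_⟩
      intro x hx y hy
      apply hcl
      · rw [List.append_cons, List.getLast?_append]
        have : l₂.getLast? = some x := hx
        rw [this]; rfl
      · rcases List.eq_nil_or_concat l₁ with h | _
        · subst h; exact absurd hy (by simp)
        · have hl1ne : l₁ ≠ [] := by
            intro h; subst h; exact absurd hy (by simp)
          rw [List.head?_append]
          have : l₁.head? = some y := hy
          rw [this]; rfl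
    exact chain_connected hm_ne hm_ch hmB

lemma goodset_clique [Fintype X] {G : SimpleGraph X} (hbg : IsBlockGraph G) {C : Set X}
    (hC : GoodSet G C) : G.IsClique C := by
  obtain ⟨B, hB, hmax⟩ := Set.Finite.exists_maximalFor id
    {B : Set X | GoodSet G B ∧ C ⊆ B} (Set.toFinite _) ⟨C, hC, subset_rfl⟩
  have hblock : IsBlock G B := ⟨hB.1, fun C' hC' hsub => hsub.antisymm (hmax ⟨hC', hB.2.trans hsub⟩ hsub)⟩
  exact (hbg B hblock).subset hB.2

end CycleAux

section ReachAux

variable {X V : Type}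

lemma reach_mono {G : SimpleGraph X} {S T' : Set X} (hST : S ⊆ T') {u v : ↥S}
    (h : (G.induce S).Reachable u v) :
    (G.induce T').Reachable ⟨u.1, hST u.2⟩ ⟨v.1, hST v.2⟩ := by
  let φ : G.induce S →g G.induce T' := ⟨fun x => ⟨x.1, hST x.2⟩, fun {a b} hab => hab⟩
  exact h.map φ

lemma exists_nodup_chain {G : SimpleGraph X} {S : Set X} {a b : X} (ha : a ∈ S) (hb : b ∈ S)
    (h : (G.induce S).Reachable ⟨a, ha⟩ ⟨b, hb⟩) :
    ∃ l : List X, l.Nodup ∧ l.Chain' G.Adj ∧ l.head? = some a ∧ l.getLast? = some b ∧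
      ∀ x ∈ l, x ∈ S := by
  obtain ⟨p⟩ := h
  refine ⟨p.bypass.support.map Subtype.val, ?_, ?_, ?_, ?_, ?_⟩
  · exact (p.bypass_isPath.support_nodup).map Subtype.val_injective
  · have hc := p.bypass.isChain_adj_support
    exact List.isChain_map_of_isChain Subtype.val (fun x y hxy => hxy) hc
  · rw [List.head?_map, p.bypass.support_eq_cons]
    rfl
  · rw [List.getLast?_map, List.getLast?_eq_head?_reverse, ← SimpleGraph.Walk.support_reverse,
      p.bypass.reverse.support_eq_cons]
    rfl
  · intro x hx
    obtain ⟨y, _, rfl⟩ := List.mem_map.mp hx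
    exact y.2

lemma subtree_reach [Fintype V] {T : XTree X V} {L : Set (Set X)} (hl : T.IsTopoLasso L)
    (w : V) (a b : X) (ha : a ∈ T.leafSet w) (hb : b ∈ T.leafSet w) :
    ((cordGraph L).induce (T.leafSet w)).Reachable ⟨a, ha⟩ ⟨b, hb⟩ := by
  have key : ∀ (n : ℕ) (w : V), ({u | T.Desc w u}).ncard ≤ n →
      ∀ (a b : X) (ha : a ∈ T.leafSet w) (hb : b ∈ T.leafSet w),
      ((cordGraph L).induce (T.leafSet w)).Reachable ⟨a, ha⟩ ⟨b, hb⟩ := by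
    intro n
    induction n with
    | zero =>
      intro w hw
      exfalso
      have hmem : w ∈ ({u | T.Desc w u}) := XTree.desc_refl T w
      have h0 : ({u | T.Desc w u}).ncard = 0 := le_antisymm hw (Nat.zero_le _)
      rw [Set.ncard_eq_zero (Set.toFinite _)] at h0
      simp [h0] at hmem
    | succ n ih =>
      intro w hw a b ha hb
      by_cases hab : a = b
      · subst hab
        rfl
      · have hIsLeaf : ¬ T.IsLeaf w := fun hl' => hab (XTree.leafSet_isLeaf hl' ha hb)
        obtain ⟨ca, hca, hda⟩ := XTree.exists_child_desc ha (fun he => hIsLeaf ⟨a, he⟩)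
        obtain ⟨cb, hcb, hdb⟩ := XTree.exists_child_desc hb (fun he => hIsLeaf ⟨b, he⟩)
        have hsa : a ∈ T.leafSet ca := hda
        have hsb : b ∈ T.leafSet cb := hdb
        have hlt : ∀ c, c ∈ T.children w → ({u | T.Desc c u}).ncard ≤ n := by
          intro c hc
          have := Set.ncard_lt_ncard (XTree.desc_ssubset hc) (Set.toFinite _)
          omega
        by_cases hcc : ca = cb
        · subst hcc
          exact reach_mono (XTree.leafSet_subset_of_child hca)
            (ih ca (hlt _ hca) a b hsa hsb)
        · obtain ⟨p, q, hp, hq, hpq⟩ := hl w ca cb hca hcb hcc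
          have r1 := reach_mono (XTree.leafSet_subset_of_child hca)
            (ih ca (hlt _ hca) a p hsa hp)
          have r3 := reach_mono (XTree.leafSet_subset_of_child hcb)
            (ih cb (hlt _ hcb) q b hq hsb)
          have hpq_ne : p ≠ q := fun h => XTree.leafSet_disjoint hca hcb hcc hp (h ▸ hq)
          have hedge : ((cordGraph L).induce (T.leafSet w)).Adj
              ⟨p, XTree.leafSet_subset_of_child hca hp⟩
              ⟨q, XTree.leafSet_subset_of_child hcb hq⟩ := ⟨hpq_ne, hpq⟩
          exact r1.trans (hedge.reachable.trans r3)
  exact key _ w le_rfl a b ha hb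
end ReachAux

section MainAux

variable {X V : Type}

lemma cord_adj {L : Set (Set X)} {a b : X} (hne : a ≠ b) (h : ({a, b} : Set X) ∈ L) :
    (cordGraph L).Adj a b := ⟨hne, h⟩

theorem stmt11' {X V : Type} [Fintype X] [Fintype V] (T : XTree X V)
    (hph : T.IsPhylo)
    (L : Set (Set X))
    (hmin : T.IsMinTopoLasso L) (hbg : IsBlockGraph (cordGraph L)) :
    ∀ v : V, T.Interior v →
      ∃! g : {c : V // c ∈ T.children v} → X,
        (∀ c : {c : V // c ∈ T.children v}, g c ∈ T.leafSet (c : V)) ∧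
        ∀ c c' : {c : V // c ∈ T.children v}, c ≠ c' → ({g c, g c'} : Set X) ∈ L := by
  intro v hv
  classical
  have hcard : 2 ≤ (T.children v).ncard := by
    by_cases hroot : v = T.root
    · subst hroot; exact hph.1
    · exact hph.2 v hroot hv
  have hpair : ∀ c₁ c₂ : {c : V // c ∈ T.children v}, (c₁ : V) ≠ (c₂ : V) →
      ∃ a, a ∈ T.leafSet (c₁ : V) ∧ ∃ b, b ∈ T.leafSet (c₂ : V) ∧ ({a, b} : Set X) ∈ L ∧
        ∀ a' b', a' ∈ T.leafSet (c₁ : V) → b' ∈ T.leafSet (c₂ : V) →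
          ({a', b'} : Set X) ∈ L → a' = a ∧ b' = b :=
    fun c₁ c₂ hne => unique_cord hmin c₁.2 c₂.2 hne
  choose F hF1 Bf hB1 hmem huniq using hpair
  -- consistency of the first endpoint
  have hconsist : ∀ (c t u : {c : V // c ∈ T.children v}) (hct : (c : V) ≠ (t : V))
      (hcu : (c : V) ≠ (u : V)), F c t hct = F c u hcu := by
    intro c t u hct hcu
    by_cases htu : t = u
    · subst htu; rfl
    · by_contra hne
      have htu' : (t : V) ≠ (u : V) := fun h => htu (Subtype.ext h)
      obtain ⟨Pc, hPc_nd, hPc_ch, hPc_h, hPc_l, hPc_S⟩ :=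
        exists_nodup_chain _ _ (subtree_reach hmin.1 (c : V) (F c t hct) (F c u hcu)
          (hF1 c t hct) (hF1 c u hcu))
      obtain ⟨Pu, hPu_nd, hPu_ch, hPu_h, hPu_l, hPu_S⟩ :=
        exists_nodup_chain _ _ (subtree_reach hmin.1 (u : V) (Bf c u hcu) (Bf t u htu')
          (hB1 c u hcu) (hB1 t u htu'))
      obtain ⟨Pt, hPt_nd, hPt_ch, hPt_h, hPt_l, hPt_S⟩ :=
        exists_nodup_chain _ _ (subtree_reach hmin.1 (t : V) (F t u htu') (Bf c t hct)
          (hF1 t u htu') (hB1 c t hct))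
      set a := F c t hct with ha_def
      set b := Bf c t hct with hb_def
      set a' := F c u hcu with ha'_def
      set d := Bf c u hcu with hd_def
      set b' := F t u htu' with hb'_def
      set d' := Bf t u htu' with hd'_def
      set l := Pc ++ (Pu ++ Pt) with hl_def
      have hPc_ne : Pc ≠ [] := fun h => by simp [h] at hPc_h
      have hPu_ne : Pu ≠ [] := fun h => by simp [h] at hPu_h
      have hPt_ne : Pt ≠ [] := fun h => by simp [h] at hPt_h
      -- disjointness of segments
      have hdis_cu : ∀ x ∈ Pc, x ∈ Pu → False := fun x hx hx' =>
        XTree.leafSet_disjoint c.2 u.2 hcu (hPc_S x hx) (hPu_S x hx')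
      have hdis_ct : ∀ x ∈ Pc, x ∈ Pt → False := fun x hx hx' =>
        XTree.leafSet_disjoint c.2 t.2 hct (hPc_S x hx) (hPt_S x hx')
      have hdis_ut : ∀ x ∈ Pu, x ∈ Pt → False := fun x hx hx' =>
        XTree.leafSet_disjoint u.2 t.2 (Ne.symm htu') (hPu_S x hx) (hPt_S x hx')
      have hl_ne : l ≠ [] := by
        simp only [hl_def, ne_eq, List.append_eq_nil_iff]
        exact fun h => hPc_ne h.1
      have hl_nd : l.Nodup := by
        rw [hl_def, List.nodup_append]
        refine ⟨hPc_nd, ?_, ?_⟩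
        · rw [List.nodup_append]
          exact ⟨hPu_nd, hPt_nd, fun x hx _ hx' hxy => hdis_ut x hx (hxy ▸ hx')⟩
        · intro x hx _ hx' rfl
          rcases List.mem_append.mp hx' with h | h
          · exact hdis_cu x hx h
          · exact hdis_ct x hx h
      have hl_ch : l.Chain' (cordGraph L).Adj := by
        rw [hl_def]
        show List.IsChain _ _
        rw [List.isChain_append]
        refine ⟨hPc_ch, ?_, ?_⟩
        · rw [List.isChain_append]
          refine ⟨hPu_ch, hPt_ch, ?_⟩
          intro x hx y hy
          rw [hPu_l] at hx
          rw [hPt_h] at hy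
          rw [Option.mem_some_iff] at hx hy
          subst hx; subst hy
          refine cord_adj ?_ ?_
          · exact fun h => XTree.leafSet_disjoint u.2 t.2 (Ne.symm htu')
              (hB1 t u htu') (show d' ∈ T.leafSet (t : V) by rw [h]; exact hF1 t u htu')
          · rw [Set.pair_comm]; exact hmem t u htu'
        · intro x hx y hy
          rw [hPc_l] at hx
          rw [List.head?_append, hPu_h] at hy
          rw [Option.mem_some_iff] at hx
          obtain rfl : d = y := by simpa using hy
          subst hx
          refine cord_adj ?_ ?_
          · exact fun h => XTree.leafSet_disjoint c.2 u.2 hcu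
              (hF1 c u hcu) (show a' ∈ T.leafSet (u : V) by rw [h]; exact hB1 c u hcu)
          · exact hmem c u hcu
      have hl_cl : ∀ x ∈ l.getLast?, ∀ y ∈ l.head?, (cordGraph L).Adj x y := by
        intro x hx y hy
        rw [hl_def, List.getLast?_append, List.getLast?_append, hPt_l] at hx
        rw [hl_def, List.head?_append, hPc_h] at hy
        obtain rfl : b = x := by simpa using hx
        obtain rfl : a = y := by simpa using hy
        refine cord_adj ?_ ?_
        · exact fun h => XTree.leafSet_disjoint t.2 c.2 (Ne.symm hct)
            (hB1 c t hct) (show b ∈ T.leafSet (c : V) by rw [h]; exact hF1 c t hct)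
        · rw [Set.pair_comm]; exact hmem c t hct
      have hclq := goodset_clique hbg (cycle_goodset hl_ne hl_nd hl_ch hl_cl)
      have ha'_mem : a' ∈ {x | x ∈ l} := by
        have : a' ∈ Pc := List.mem_of_getLast? hPc_l
        simp only [hl_def, Set.mem_setOf_eq, List.mem_append]
        exact Or.inl this
      have hb_mem : b ∈ {x | x ∈ l} := by
        have : b ∈ Pt := List.mem_of_getLast? hPt_l
        simp only [hl_def, Set.mem_setOf_eq, List.mem_append]
        exact Or.inr (Or.inr this)
      have ha'b : a' ≠ b := fun h =>
        XTree.leafSet_disjoint c.2 t.2 hct (hF1 c u hcu)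
          (show a' ∈ T.leafSet (t : V) by rw [h]; exact hB1 c t hct)
      have hadj := hclq ha'_mem hb_mem ha'b
      have := (huniq c t hct a' b (hF1 c u hcu) (hB1 c t hct) hadj.2).1
      exact hne this.symm
  -- companions
  have hch_ne : ∀ c : {c : V // c ∈ T.children v}, ∃ c' : {c : V // c ∈ T.children v},
      (c : V) ≠ (c' : V) := by
    intro c
    obtain ⟨b, hb, hbne⟩ := Set.exists_ne_of_one_lt_ncard (s := T.children v) (by omega) (c : V)
    exact ⟨⟨b, hb⟩, fun h => hbne h.symm⟩
  choose comp hcomp using hch_ne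
  refine ⟨fun c => F c (comp c) (hcomp c), ⟨fun c => hF1 c (comp c) (hcomp c), ?_⟩, ?_⟩
  · intro c c' hne
    have hne' : (c : V) ≠ (c' : V) := fun h => hne (Subtype.ext h)
    have h1 : F c (comp c) (hcomp c) = F c c' hne' := hconsist c (comp c) c' (hcomp c) hne'
    have h2 : F c' (comp c') (hcomp c') = F c' c (Ne.symm hne') :=
      hconsist c' (comp c') c (hcomp c') (Ne.symm hne')
    have h4 := hmem c' c (Ne.symm hne')
    rw [Set.pair_comm] at h4
    have h5 := huniq c c' hne' (Bf c' c (Ne.symm hne')) (F c' c (Ne.symm hne'))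
      (hB1 c' c (Ne.symm hne')) (hF1 c' c (Ne.symm hne')) h4
    show ({F c (comp c) (hcomp c), F c' (comp c') (hcomp c')} : Set X) ∈ L
    rw [h1, h2, h5.2]
    exact hmem c c' hne'
  · intro g' ⟨hg1', hg2'⟩
    funext c
    have hne' : c ≠ comp c := fun h => (hcomp c) (congrArg Subtype.val h)
    have := huniq c (comp c) (hcomp c) (g' c) (g' (comp c)) (hg1' c) (hg1' (comp c))
      (hg2' c (comp c) hne')
    exact this.1

end MainAux

/-- if `L` is a minimal topological lasso for `T` with `Γ(L)` a block
graph, then for every interior vertex `v` there is a unique choice of one leaf below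
each child of `v` such that all pairs of chosen leaves are cords of `L`. -/
theorem stmt11 {X V : Type} [Fintype X] [Fintype V] (T : XTree X V)
    (hph : T.IsPhylo) (hX : 3 ≤ Fintype.card X)
    (L : Set (Set X)) (hc : ∀ c ∈ L, IsCord c) (hcov : ∀ x : X, ∃ c ∈ L, x ∈ c)
    (hmin : T.IsMinTopoLasso L) (hbg : IsBlockGraph (cordGraph L)) :
    ∀ v : V, T.Interior v →
      ∃! g : {c : V // c ∈ T.children v} → X,
        (∀ c : {c : V // c ∈ T.children v}, g c ∈ T.leafSet (c : V)) ∧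
        ∀ c c' : {c : V // c ∈ T.children v}, c ≠ c' → ({g c, g c'} : Set X) ∈ L :=
  stmt11' T hph L hmin hbg
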